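/- Let σ_b^k (b ∈ {0,1}) be the equal mixtures over Ω_b^k of tensor products of |+⟩⟨+| (for bit 0) and |1⟩⟨1| (for bit 1), and let ρ_b^k be the equal mixtures over r ∈ Ω_b^k and s ∈ {0,1}^k of ⊗_j |r_j⟩_{s_j}⟨r_j|, where |0⟩₀=|0⟩, |1⟩₀=|1⟩, |0⟩₁=|+⟩, |1⟩₁=|−⟩. Define the channel U(τ) = (1/2^k) Σ_{i∈{0,1}^k} (H^{i₁}⊗⋯⊗H^{i_k}) τ (H^{i₁}⊗⋯⊗H^{i_k})†. Then U(σ₀^k) = ρ₀^k and U(σ₁^k) = ρ₁^k. -/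

import Mathlib

open Matrix Kronecker ComplexOrder

/-- `|M| = √(Mᴴ M)`, the positive-semidefinite absolute value of a matrix. -/
noncomputable def matAbs {n : Type*} [Fintype n] [DecidableEq n]
    (M : Matrix n n ℂ) : Matrix n n ℂ :=
  (Matrix.posSemidef_conjTranspose_mul_self M).isHermitian.eigenvectorUnitary.1 *
    diagonal ((↑) ∘ (√·) ∘ (Matrix.posSemidef_conjTranspose_mul_self M).isHermitian.eigenvalues) *
    (star (Matrix.posSemidef_conjTranspose_mul_self M).isHermitian.eigenvectorUnitary :
      Matrix n n ℂ)

/-- Trace distance `D(A,B) = (1/2) Tr |A - B|`. -/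
noncomputable def traceDist {n : Type*} [Fintype n] [DecidableEq n]
    (A B : Matrix n n ℂ) : ℝ :=
  (1 / 2) * (Matrix.trace (matAbs (A - B))).re

/-- |+⟩⟨+| -/
noncomputable def projPlus : Matrix (Fin 2) (Fin 2) ℂ := !![1/2, 1/2; 1/2, 1/2]

/-- |1⟩⟨1| -/
noncomputable def projOne : Matrix (Fin 2) (Fin 2) ℂ := !![0, 0; 0, 1]

/-- |φ₀⟩⟨φ₀| = |+⟩⟨+| and |φ₁⟩⟨φ₁| = |1⟩⟨1| -/
noncomputable def phiProj : Fin 2 → Matrix (Fin 2) (Fin 2) ℂ := ![projPlus, projOne]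

/-- σ_b^k : equal mixture over Ω_b^k of ⊗_j |φ_{i_j}⟩⟨φ_{i_j}|. -/
noncomputable def sigmaMix (b : Fin 2) (k : ℕ) :
    Matrix (Fin k → Fin 2) (Fin k → Fin 2) ℂ :=
  ((2 : ℂ) ^ (k - 1))⁻¹ •
    ∑ i ∈ Finset.univ.filter (fun i : Fin k → Fin 2 => ∑ j, i j = b),
      Matrix.of fun x y => ∏ j, phiProj (i j) (x j) (y j)

/-- the conjugate-coding states |r⟩_s : |0⟩₀=|0⟩, |1⟩₀=|1⟩, |0⟩₁=|+⟩, |1⟩₁=|−⟩. -/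
noncomputable def cket (r s : Fin 2) : Fin 2 → ℂ :=
  if s = 0 then (if r = 0 then ![1, 0] else ![0, 1])
  else (if r = 0 then ![(Real.sqrt 2 / 2 : ℂ), (Real.sqrt 2 / 2 : ℂ)]
        else ![(Real.sqrt 2 / 2 : ℂ), -(Real.sqrt 2 / 2 : ℂ)])

/-- |r⟩_s⟨r| -/
noncomputable def cProj (r s : Fin 2) : Matrix (Fin 2) (Fin 2) ℂ :=
  Matrix.vecMulVec (cket r s) (star (cket r s))

/-- ρ_b^k : equal mixture over keys s ∈ {0,1}^k and r ∈ Ω_b^k of ⊗_j |r_j⟩_{s_j}⟨r_j|. -/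
noncomputable def rhoMix (b : Fin 2) (k : ℕ) :
    Matrix (Fin k → Fin 2) (Fin k → Fin 2) ℂ :=
  ((2 : ℂ) ^ (2 * k - 1))⁻¹ •
    ∑ r ∈ Finset.univ.filter (fun r : Fin k → Fin 2 => ∑ j, r j = b),
      ∑ s : Fin k → Fin 2,
        Matrix.of fun x y => ∏ j, cProj (r j) (s j) (x j) (y j)

/-- the Hadamard matrix -/
noncomputable def Hmat : Matrix (Fin 2) (Fin 2) ℂ :=
  ((Real.sqrt 2 / 2 : ℝ) : ℂ) • !![1, 1; 1, -1]

/-- H⁰ = I and H¹ = H -/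
noncomputable def Hpow : Fin 2 → Matrix (Fin 2) (Fin 2) ℂ := ![1, Hmat]

/-- H^{i₁} ⊗ ⋯ ⊗ H^{i_k} -/
noncomputable def Hten {k : ℕ} (i : Fin k → Fin 2) :
    Matrix (Fin k → Fin 2) (Fin k → Fin 2) ℂ :=
  Matrix.of fun x y => ∏ j, Hpow (i j) (x j) (y j)

/-- the random-Hadamard channel U(τ) = 2^{-k} Σ_i H_i τ H_iᴴ -/
noncomputable def hadChan {k : ℕ} (τ : Matrix (Fin k → Fin 2) (Fin k → Fin 2) ℂ) :
    Matrix (Fin k → Fin 2) (Fin k → Fin 2) ℂ :=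
  ((2 : ℂ) ^ k)⁻¹ • ∑ i : Fin k → Fin 2, Hten i * τ * (Hten i)ᴴ


section AuxHad
variable {k : ℕ}

lemma myTprod_mul (M N : Fin k → Matrix (Fin 2) (Fin 2) ℂ) :
    (Matrix.of fun x y : Fin k → Fin 2 => ∏ j, M j (x j) (y j)) *
      (Matrix.of fun x y : Fin k → Fin 2 => ∏ j, N j (x j) (y j)) =
      Matrix.of fun x y : Fin k → Fin 2 => ∏ j, (M j * N j) (x j) (y j) := by
  ext x y
  simp only [Matrix.mul_apply, Matrix.of_apply]
  have : ∀ z : Fin k → Fin 2,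
      (∏ j, M j (x j) (z j)) * ∏ j, N j (z j) (y j)
        = ∏ j, M j (x j) (z j) * N j (z j) (y j) := by
    intro z; rw [Finset.prod_mul_distrib]
  simp only [this]
  rw [Finset.prod_univ_sum, Fintype.piFinset_univ]

lemma myTprod_conjT (M : Fin k → Matrix (Fin 2) (Fin 2) ℂ) :
    (Matrix.of fun x y : Fin k → Fin 2 => ∏ j, M j (x j) (y j))ᴴ =
      Matrix.of fun x y : Fin k → Fin 2 => ∏ j, (M j)ᴴ (x j) (y j) := by
  ext x y
  simp [Matrix.conjTranspose_apply, map_prod]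

lemma single_qubit (i r : Fin 2) : Hpow i * phiProj r * (Hpow i)ᴴ = cProj r (i + r + 1) := by
  have h2 : ((Real.sqrt 2 : ℝ) : ℂ) ^ 2 = 2 := by
    norm_cast
    exact Real.sq_sqrt (by norm_num)
  fin_cases i <;> fin_cases r <;>
    ext a b <;> fin_cases a <;> fin_cases b <;>
    simp [Hpow, Hmat, phiProj, projPlus, projOne, cProj, cket, Matrix.mul_apply,
      Fin.sum_univ_two, Matrix.vecMulVec_apply, Matrix.conjTranspose_apply] <;>
    ring_nf <;> simp [h2, Complex.conj_ofNat] <;> norm_num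

lemma conj_tprod (i r : Fin k → Fin 2) :
    Hten i * (Matrix.of fun x y : Fin k → Fin 2 => ∏ j, phiProj (r j) (x j) (y j)) *
      (Hten i)ᴴ =
      Matrix.of fun x y : Fin k → Fin 2 => ∏ j, cProj (r j) (i j + r j + 1) (x j) (y j) := by
  have h1 : Hten i = Matrix.of fun x y : Fin k → Fin 2 => ∏ j, Hpow (i j) (x j) (y j) := rfl
  rw [h1, myTprod_mul, myTprod_conjT, myTprod_mul]
  congr 1
  ext x y
  congr 1
  ext j
  rw [show Hpow (i j) * phiProj (r j) * (Hpow (i j))ᴴ = cProj (r j) (i j + r j + 1) from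
    single_qubit _ _]

lemma hadChan_sigma (b : Fin 2) (hk : 1 ≤ k) : hadChan (sigmaMix b k) = rhoMix b k := by
  have hfin : ∀ a c : Fin 2, a + c + 1 + c + 1 = a := by decide
  unfold hadChan sigmaMix rhoMix
  simp only [Matrix.mul_smul, Matrix.smul_mul, Finset.smul_sum, Finset.mul_sum,
    Finset.sum_mul, smul_smul]
  rw [Finset.sum_comm]
  have hkk : k + (k - 1) = 2 * k - 1 := by omega
  have hs : ((2:ℂ)^k)⁻¹ * ((2:ℂ)^(k-1))⁻¹ = ((2:ℂ)^(2*k-1))⁻¹ := by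
    rw [← mul_inv, ← pow_add, hkk]
  simp only [hs]
  refine Finset.sum_congr rfl fun r hr => ?_
  rw [← Finset.smul_sum, ← Finset.smul_sum]
  congr 1
  have := Fintype.sum_bijective (e := fun s : Fin k → Fin 2 => fun j => s j + r j + 1)
    (Function.Involutive.bijective (fun s => by funext j; simp [hfin]))
    (fun s => Matrix.of fun x y : Fin k → Fin 2 => ∏ j, cProj (r j) (s j) (x j) (y j))
    (fun i => Hten i * (Matrix.of fun x y : Fin k → Fin 2 =>
      ∏ j, phiProj (r j) (x j) (y j)) * (Hten i)ᴴ)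
    (fun s => by
      rw [conj_tprod]
      congr 1
      ext x y
      congr 1
      ext j
      rw [hfin])
  rw [← this]

end AuxHad

theorem hadChan_sigmaMix_eq_rhoMix (k : ℕ) (hk : 1 ≤ k) :
    hadChan (sigmaMix 0 k) = rhoMix 0 k ∧ hadChan (sigmaMix 1 k) = rhoMix 1 k := by
  exact ⟨hadChan_sigma 0 hk, hadChan_sigma 1 hk⟩
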